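/- Let W denote an irreducible T-module. Then for 0 ≤ i ≤ D: P(E_i W) = E*_i W, P(E*_i W) = E^ε_i W, and P(E^ε_i W) = E_i W. -/

import Mathlib

noncomputable section

open Matrix Finset

/-- Vertex set of the hypercube `Q_D`: binary strings of length `D`. -/
abbrev Vtx (D : ℕ) := Fin D → Bool

/-- Hamming weight of a vertex, i.e. its distance to the fixed vertex `x = (0,...,0)`. -/
def wt {D : ℕ} (y : Vtx D) : ℕ := (Finset.univ.filter fun k => y k = true).card

/-- The adjacency matrix of the hypercube `Q_D`: `A_{yz} = 1` iff `y,z` differ in exactly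
one coordinate. -/
def adjMat (D : ℕ) : Matrix (Vtx D) (Vtx D) ℂ :=
  fun y z => if (Finset.univ.filter fun k => y k ≠ z k).card = 1 then 1 else 0

/-- The dual adjacency matrix of `Q_D` with respect to `x = (0,...,0)`: the diagonal
matrix with `(y,y)`-entry `D - 2·wt(y)`. -/
def dualAdjMat (D : ℕ) : Matrix (Vtx D) (Vtx D) ℂ :=
  Matrix.diagonal fun y => (D : ℂ) - 2 * (wt y : ℂ)

/-- The imaginary adjacency matrix `Aᵉ = -i(AA* - A*A)/2`. -/
def imagAdjMat (D : ℕ) : Matrix (Vtx D) (Vtx D) ℂ :=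
  (-Complex.I / 2) • (adjMat D * dualAdjMat D - dualAdjMat D * adjMat D)

/-- The 2×2 matrix `P₁` with entries `(P₁)₀₀ = 1`, `(P₁)₀₁ = 1`, `(P₁)₁₀ = -i`,
`(P₁)₁₁ = i`. -/
def P1 : Bool → Bool → ℂ
  | false, false => 1
  | false, true  => 1
  | true,  false => -Complex.I
  | true,  true  => Complex.I

/-- The D-fold Kronecker power `P = P₁^{⊗D}`, i.e. `P_{yz} = ∏_k (P₁)_{y_k z_k}`. -/
def Pmat (D : ℕ) : Matrix (Vtx D) (Vtx D) ℂ :=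
  fun y z => ∏ k : Fin D, P1 (y k) (z k)

/-- The eigenvalues `θ_j = D - 2j`. -/
def theta (D j : ℕ) : ℂ := (D : ℂ) - 2 * (j : ℂ)

/-- The `i`-th primitive idempotent `E_i = ∏_{0 ≤ j ≤ D, j ≠ i} (A - θ_j I)/(θ_i - θ_j)`. -/
def Emat (D i : ℕ) : Matrix (Vtx D) (Vtx D) ℂ :=
  Polynomial.aeval (adjMat D)
    (∏ j ∈ (Finset.range (D + 1)).erase i,
      Polynomial.C ((theta D i - theta D j)⁻¹) * (Polynomial.X - Polynomial.C (theta D j)))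

/-- The `i`-th dual idempotent `E*_i`: diagonal with `(y,y)`-entry `1` if `wt(y) = i`. -/
def EstarMat (D i : ℕ) : Matrix (Vtx D) (Vtx D) ℂ :=
  Matrix.diagonal fun y => if wt y = i then 1 else 0

/-- The `i`-th imaginary idempotent `Eᵉ_i = P⁻¹ E_i P`. -/
def EepsMat (D i : ℕ) : Matrix (Vtx D) (Vtx D) ℂ :=
  (Pmat D)⁻¹ * Emat D i * Pmat D

/-- `W` is a `T`-module: a subspace of `ℂ^X` invariant under `A` and `A*`. -/
def IsTMod (D : ℕ) (W : Submodule ℂ (Vtx D → ℂ)) : Prop :=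
  (∀ w ∈ W, (adjMat D).mulVec w ∈ W) ∧ (∀ w ∈ W, (dualAdjMat D).mulVec w ∈ W)

/-- `W` is an irreducible `T`-module. -/
def IsIrredTMod (D : ℕ) (W : Submodule ℂ (Vtx D → ℂ)) : Prop :=
  IsTMod D W ∧ W ≠ ⊥ ∧
    ∀ U : Submodule ℂ (Vtx D → ℂ), IsTMod D U → U ≤ W → U = ⊥ ∨ U = W

/-- The Hermitian inner product `⟨u,v⟩ = uᵗ · conj v` (linear in the first argument). -/
def inp {D : ℕ} (u v : Vtx D → ℂ) : ℂ := ∑ y, u y * (starRingEnd ℂ) (v y)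

section HCProof

open Polynomial

variable {D : ℕ}

/-- Hamming distance. -/
abbrev ham (y z : Vtx D) : ℕ := (Finset.univ.filter fun k => y k ≠ z k).card

lemma ham_le (y z : Vtx D) : ham y z ≤ D := by
  simpa using Finset.card_filter_le Finset.univ (fun k => y k ≠ z k)

lemma wt_le (y : Vtx D) : wt y ≤ D := by
  simpa [wt] using Finset.card_filter_le Finset.univ (fun k => y k = true)

lemma ham_eq_zero_iff (y z : Vtx D) : ham y z = 0 ↔ y = z := by
  rw [Finset.card_eq_zero, Finset.filter_eq_empty_iff]
  constructor
  · intro h; funext k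
    have := h (Finset.mem_univ k)
    simpa using this
  · rintro rfl k _; simp

lemma filter_update_eq (y z : Vtx D) (k : Fin D) :
    (Finset.univ.filter fun j => y j ≠ Function.update z k (!z k) j)
      = if y k = z k then insert k (Finset.univ.filter fun j => y j ≠ z j)
        else (Finset.univ.filter fun j => y j ≠ z j).erase k := by
  split_ifs with h
  · ext j
    simp only [Finset.mem_filter, Finset.mem_univ, true_and, Finset.mem_insert]
    by_cases hj : j = k
    · subst hj
      rw [Function.update_self, h]
      cases z j <;> simp
    · simp [Function.update_of_ne hj, hj]
  · ext j
    simp only [Finset.mem_filter, Finset.mem_univ, true_and, Finset.mem_erase]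
    by_cases hj : j = k
    · subst hj
      rw [Function.update_self]
      revert h; cases y j <;> cases z j <;> simp
    · simp [Function.update_of_ne hj, hj]

lemma ham_update_eq {y z : Vtx D} {k : Fin D} (h : y k = z k) :
    ham y (Function.update z k (!z k)) = ham y z + 1 := by
  unfold ham
  rw [filter_update_eq, if_pos h, Finset.card_insert_of_notMem (by simp [h])]

lemma ham_update_ne {y z : Vtx D} {k : Fin D} (h : y k ≠ z k) :
    ham y (Function.update z k (!z k)) + 1 = ham y z := by
  unfold ham
  rw [filter_update_eq, if_neg h,
    Finset.card_erase_of_mem (by simp [h])]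
  have : 0 < (Finset.univ.filter fun j => y j ≠ z j).card :=
    Finset.card_pos.2 ⟨k, by simp [h]⟩
  omega

lemma eq_update_iff (w z : Vtx D) (k : Fin D) :
    w = Function.update z k (!z k) ↔ (Finset.univ.filter fun j => w j ≠ z j) = {k} := by
  constructor
  · rintro rfl
    ext j
    simp only [Finset.mem_filter, Finset.mem_univ, true_and, Finset.mem_singleton]
    by_cases hj : j = k
    · subst hj; simp
    · simp [Function.update_of_ne hj, hj]
  · intro h
    funext j
    by_cases hj : j = k
    · subst hj
      have hmem : j ∈ (Finset.univ.filter fun j' => w j' ≠ z j') := by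
        rw [h]; exact Finset.mem_singleton_self j
      have hne : w j ≠ z j := (Finset.mem_filter.mp hmem).2
      rw [Function.update_self]
      revert hne; cases w j <;> cases z j <;> simp
    · have : j ∉ (Finset.univ.filter fun j' => w j' ≠ z j') := by
        rw [h]; simpa using hj
      have : ¬ w j ≠ z j := by simpa using this
      rw [Function.update_of_ne hj]
      exact not_not.mp this

lemma adjMat_apply (y z : Vtx D) : adjMat D y z = if ham y z = 1 then 1 else 0 := rfl

lemma adjMat_apply_eq_sum (w z : Vtx D) :
    adjMat D w z = ∑ k : Fin D, if w = Function.update z k (!z k) then 1 else 0 := by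
  rw [adjMat_apply]
  by_cases h : ham w z = 1
  · obtain ⟨k₀, hk₀⟩ := Finset.card_eq_one.mp h
    rw [if_pos h]
    rw [Finset.sum_congr rfl (fun k _ => if_congr (by
      rw [eq_update_iff, hk₀, Finset.singleton_inj, eq_comm]) rfl rfl)]
    simp
  · rw [if_neg h]
    refine (Finset.sum_eq_zero fun k _ => ?_).symm
    rw [if_neg]
    intro hw
    refine h ?_
    show (Finset.univ.filter fun j => w j ≠ z j).card = 1
    rw [(eq_update_iff w z k).mp hw]; simp

lemma mul_adj_apply (M : Matrix (Vtx D) (Vtx D) ℂ) (y z : Vtx D) :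
    (M * adjMat D) y z = ∑ k : Fin D, M y (Function.update z k (!z k)) := by
  rw [Matrix.mul_apply]
  simp only [adjMat_apply_eq_sum, Finset.mul_sum, mul_ite, mul_one, mul_zero]
  rw [Finset.sum_comm]
  refine Finset.sum_congr rfl fun k _ => ?_
  simp

lemma P1_not (a b : Bool) : P1 a (!b) = (if a then -1 else 1) * P1 a b := by
  cases a <;> cases b <;> simp [P1]

lemma Pmat_apply (y z : Vtx D) : Pmat D y z = ∏ k, P1 (y k) (z k) := rfl

lemma Pmat_update (y z : Vtx D) (k : Fin D) :
    Pmat D y (Function.update z k (!z k)) = (if y k then -1 else 1) * Pmat D y z := by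
  rw [Pmat_apply, Pmat_apply,
    ← Finset.mul_prod_erase Finset.univ _ (Finset.mem_univ k),
    ← Finset.mul_prod_erase Finset.univ (fun j => P1 (y j) (z j)) (Finset.mem_univ k),
    Function.update_self,
    Finset.prod_congr rfl (fun j hj => by
      rw [Function.update_of_ne (Finset.ne_of_mem_erase hj)]),
    P1_not]
  ring

lemma sum_sign (y : Vtx D) : (∑ k, if y k then (-1:ℂ) else 1) = (D:ℂ) - 2 * wt y := by
  have hsplit := Finset.sum_filter_add_sum_filter_not Finset.univ
    (fun k => y k = true) (fun k => if y k then (-1:ℂ) else 1)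
  have h1 : (∑ k ∈ Finset.univ.filter (fun k => y k = true),
      if y k then (-1:ℂ) else 1) = -(wt y : ℂ) := by
    rw [Finset.sum_congr rfl (fun k hk => by
      rw [if_pos (Finset.mem_filter.mp hk).2]), Finset.sum_const, wt]
    simp
  have h2 : (∑ k ∈ Finset.univ.filter (fun k => ¬ y k = true),
      if y k then (-1:ℂ) else 1) = ((D:ℂ) - wt y) := by
    rw [Finset.sum_congr rfl (fun k hk => by
      rw [if_neg (Finset.mem_filter.mp hk).2]), Finset.sum_const]
    have hcard := Finset.card_filter_add_card_filter_not
      (s := Finset.univ) (p := fun k : Fin D => y k = true)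
    have hwt := wt_le y
    have : (Finset.univ.filter (fun k : Fin D => ¬ y k = true)).card = D - wt y := by
      simp only [Finset.card_univ, Fintype.card_fin] at hcard
      rw [wt] at hwt ⊢
      omega
    rw [this]
    have : ((D - wt y : ℕ) : ℂ) = (D:ℂ) - wt y := by
      push_cast [Nat.cast_sub (wt_le y)]; ring
    simp [this]
  rw [← hsplit, h1, h2]; ring

lemma dual_mul_P : dualAdjMat D * Pmat D = Pmat D * adjMat D := by
  ext y z
  rw [dualAdjMat, Matrix.diagonal_mul, mul_adj_apply]
  simp only [Pmat_update]
  rw [← Finset.sum_mul, sum_sign]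

/-- D-fold Kronecker power of a 2×2 matrix. -/
def kron (D : ℕ) (M : Matrix Bool Bool ℂ) : Matrix (Vtx D) (Vtx D) ℂ :=
  Matrix.of fun y z => ∏ k, M (y k) (z k)

lemma kron_mul (M N : Matrix Bool Bool ℂ) : kron D M * kron D N = kron D (M * N) := by
  ext y z
  rw [Matrix.mul_apply]
  show (∑ u : Vtx D, (∏ k, M (y k) (u k)) * ∏ k, N (u k) (z k))
      = ∏ k, (M * N) (y k) (z k)
  simp only [Matrix.mul_apply]
  rw [Finset.prod_univ_sum, Fintype.piFinset_univ]
  refine Finset.sum_congr rfl fun u _ => ?_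
  rw [← Finset.prod_mul_distrib]

lemma Pmat_eq_kron : Pmat D = kron D (Matrix.of P1) := rfl

def Km : Matrix Bool Bool ℂ := Matrix.of fun a b => if a = b then 1 else -Complex.I

def D1m : Matrix Bool Bool ℂ :=
  Matrix.of fun a b => if a = b then (if a then Complex.I else 1) else 0

lemma P1_factor : (Matrix.of P1 : Matrix Bool Bool ℂ) = Km * D1m := by
  ext a b
  rw [Matrix.mul_apply]
  cases a <;> cases b <;>
    simp [Km, D1m, P1, Fintype.sum_bool]

lemma kron_Km_apply (y z : Vtx D) : kron D Km y z = (-Complex.I) ^ (ham y z) := by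
  show (∏ k, (if y k = z k then (1:ℂ) else -Complex.I)) = _
  rw [Finset.prod_ite, Finset.prod_const_one, one_mul, Finset.prod_const]

lemma kron_D1m_eq : kron D D1m = Matrix.diagonal (fun y => Complex.I ^ (wt y)) := by
  ext y z
  by_cases h : y = z
  · subst h
    rw [Matrix.diagonal_apply_eq]
    show (∏ k, (if y k = y k then (if y k then Complex.I else (1:ℂ)) else 0)) = _
    rw [Finset.prod_congr rfl (fun k _ => if_pos rfl)]
    simp [Finset.prod_ite, Finset.prod_const, wt]
  · rw [Matrix.diagonal_apply_ne _ h]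
    have : ∃ k, y k ≠ z k := by
      by_contra hc
      push_neg at hc
      exact h (funext hc)
    obtain ⟨k, hk⟩ := this
    exact Finset.prod_eq_zero (Finset.mem_univ k) (by simp [D1m, hk])

/-- Distance-`m` matrix of the hypercube. -/
def Am (D m : ℕ) : Matrix (Vtx D) (Vtx D) ℂ :=
  Matrix.of fun y z => if ham y z = m then 1 else 0

lemma Am_zero : Am D 0 = 1 := by
  ext y z
  rw [Am, Matrix.of_apply, Matrix.one_apply]
  exact if_congr (ham_eq_zero_iff y z) rfl rfl

lemma Am_one : Am D 1 = adjMat D := rfl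

/-- `K = Σ_m (-i)^m A_m`. -/
def Kmat (D : ℕ) : Matrix (Vtx D) (Vtx D) ℂ :=
  ∑ m ∈ Finset.range (D+1), (-Complex.I) ^ m • Am D m

lemma Kmat_eq_kron : Kmat D = kron D Km := by
  ext y z
  rw [kron_Km_apply, Kmat, Matrix.sum_apply]
  rw [Finset.sum_eq_single_of_mem (ham y z)
    (Finset.mem_range.mpr (by have := ham_le y z; omega))
    (fun m _ hm => by simp [Am, Ne.symm hm])]
  simp [Am]

/-- `D₁ = Σ_j i^j E*_j`. -/
def D1mat (D : ℕ) : Matrix (Vtx D) (Vtx D) ℂ :=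
  ∑ j ∈ Finset.range (D+1), Complex.I ^ j • EstarMat D j

lemma D1mat_eq_kron : D1mat D = kron D D1m := by
  rw [kron_D1m_eq]
  ext y z
  rw [D1mat, Matrix.sum_apply]
  by_cases h : y = z
  · subst h
    rw [Matrix.diagonal_apply_eq]
    rw [Finset.sum_eq_single_of_mem (wt y)
      (Finset.mem_range.mpr (by have := wt_le y; omega))
      (fun m _ hm => by simp [EstarMat, Matrix.diagonal_apply_eq, Ne.symm hm])]
    simp [EstarMat]
  · rw [Matrix.diagonal_apply_ne _ h]
    exact Finset.sum_eq_zero fun m _ => by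
      simp [EstarMat, Matrix.diagonal_apply_ne _ h]

lemma P_factor : Pmat D = Kmat D * D1mat D := by
  rw [Kmat_eq_kron, D1mat_eq_kron, kron_mul, ← P1_factor, Pmat_eq_kron]

lemma Am_mul_adj (m : ℕ) :
    Am D (m+1) * adjMat D
      = ((m:ℂ)+2) • Am D (m+2) + ((D:ℂ) - (m:ℂ)) • Am D m := by
  ext y z
  rw [mul_adj_apply]
  rw [← Finset.sum_filter_add_sum_filter_not Finset.univ (fun k => y k = z k)]
  have h1 : (∑ k ∈ Finset.univ.filter (fun k => y k = z k),
      Am D (m+1) y (Function.update z k (!z k)))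
      = (∑ k ∈ Finset.univ.filter (fun k => y k = z k),
          if ham y z = m then (1:ℂ) else 0) := by
    refine Finset.sum_congr rfl fun k hk => ?_
    rw [Am, Matrix.of_apply, ham_update_eq (Finset.mem_filter.mp hk).2]
    exact if_congr (by omega) rfl rfl
  have h2 : (∑ k ∈ Finset.univ.filter (fun k => ¬ y k = z k),
      Am D (m+1) y (Function.update z k (!z k)))
      = (∑ k ∈ Finset.univ.filter (fun k => ¬ y k = z k),
          if ham y z = m + 2 then (1:ℂ) else 0) := by
    refine Finset.sum_congr rfl fun k hk => ?_
    rw [Am, Matrix.of_apply]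
    have hup := ham_update_ne (y := y) (z := z) (k := k) (Finset.mem_filter.mp hk).2
    exact if_congr (by omega) rfl rfl
  rw [h1, h2, Finset.sum_const, Finset.sum_const]
  have hle := ham_le y z
  have hcard2 : (Finset.univ.filter fun k => ¬ y k = z k).card = ham y z := rfl
  have hcard1 : (Finset.univ.filter fun k => y k = z k).card = D - ham y z := by
    have hsum := Finset.card_filter_add_card_filter_not
      (s := Finset.univ) (p := fun k : Fin D => y k = z k)
    simp only [Finset.card_univ, Fintype.card_fin] at hsum
    unfold ham at hcard2 ⊢
    omega
  rw [hcard1, hcard2, Matrix.add_apply, Matrix.smul_apply, Matrix.smul_apply,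
    Am, Am, Matrix.of_apply, Matrix.of_apply]
  by_cases e1 : ham y z = m
  · have e2 : ¬ ham y z = m + 2 := by omega
    rw [if_pos e1, if_neg e2, e1]
    simp only [smul_zero, add_zero, zero_add, nsmul_eq_mul, mul_one, smul_eq_mul]
    push_cast [Nat.cast_sub (by omega : m ≤ D)]
    ring
  · by_cases e2 : ham y z = m + 2
    · rw [if_neg e1, if_pos e2, e2]
      simp only [smul_zero, add_zero, zero_add, nsmul_eq_mul, mul_one, smul_eq_mul]
      push_cast
      ring
    · rw [if_neg e1, if_neg e2]
      simp

lemma sum_mulVec' {ι : Type*} (s : Finset ι) (M : ι → Matrix (Vtx D) (Vtx D) ℂ)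
    (w : Vtx D → ℂ) : (∑ j ∈ s, M j).mulVec w = ∑ j ∈ s, (M j).mulVec w := by
  funext x
  simp [Matrix.mulVec, dotProduct, Matrix.sum_apply, Finset.sum_mul,
    Finset.sum_apply]
  rw [Finset.sum_comm]

lemma aeval_mulVec_mem (M : Matrix (Vtx D) (Vtx D) ℂ) {W : Submodule ℂ (Vtx D → ℂ)}
    (hM : ∀ w ∈ W, M.mulVec w ∈ W) (p : Polynomial ℂ) :
    ∀ w ∈ W, (Polynomial.aeval M p).mulVec w ∈ W := by
  induction p using Polynomial.induction_on with
  | C a =>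
      intro w hw
      rw [Polynomial.aeval_C, Algebra.algebraMap_eq_smul_one,
        Matrix.smul_mulVec, Matrix.one_mulVec]
      exact W.smul_mem a hw
  | add p q hp hq =>
      intro w hw
      rw [_root_.map_add, Matrix.add_mulVec]
      exact W.add_mem (hp w hw) (hq w hw)
  | monomial n a hp =>
      intro w hw
      rw [pow_succ, ← mul_assoc, _root_.map_mul, Polynomial.aeval_X, ← Matrix.mulVec_mulVec]
      exact hp _ (hM w hw)

lemma Am_mulVec_mem {W : Submodule ℂ (Vtx D → ℂ)}
    (hA : ∀ w ∈ W, (adjMat D).mulVec w ∈ W) :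
    ∀ m, ∀ w ∈ W, (Am D m).mulVec w ∈ W := by
  have key : ∀ m, (∀ w ∈ W, (Am D m).mulVec w ∈ W)
      ∧ (∀ w ∈ W, (Am D (m+1)).mulVec w ∈ W) := by
    intro m
    induction m with
    | zero =>
        constructor
        · intro w hw; rw [Am_zero, Matrix.one_mulVec]; exact hw
        · intro w hw; rw [Am_one]; exact hA w hw
    | succ n ih =>
        refine ⟨ih.2, ?_⟩
        intro w hw
        have hne : ((n:ℂ) + 2) ≠ 0 := by
          have h0 : ((n + 2 : ℕ) : ℂ) ≠ 0 := Nat.cast_ne_zero.mpr (by omega)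
          push_cast at h0; exact h0
        have h2 : Am D (n+2) = ((n:ℂ)+2)⁻¹ •
            (Am D (n+1) * adjMat D - ((D:ℂ) - (n:ℂ)) • Am D n) := by
          rw [Am_mul_adj, add_sub_cancel_right, smul_smul, inv_mul_cancel₀ hne, one_smul]
        rw [h2, Matrix.smul_mulVec, Matrix.sub_mulVec, Matrix.smul_mulVec,
          ← Matrix.mulVec_mulVec]
        exact W.smul_mem _ (W.sub_mem (ih.2 _ (hA w hw)) (W.smul_mem _ (ih.1 w hw)))
  exact fun m => (key m).1

/-- The defining polynomial of `E_i`. -/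
def qpoly (D i : ℕ) : Polynomial ℂ :=
  ∏ j ∈ (Finset.range (D + 1)).erase i,
    Polynomial.C ((theta D i - theta D j)⁻¹) * (Polynomial.X - Polynomial.C (theta D j))

lemma Emat_eq (i : ℕ) : Emat D i = Polynomial.aeval (adjMat D) (qpoly D i) := rfl

lemma theta_sub_ne {a b : ℕ} (h : a ≠ b) : theta D a - theta D b ≠ 0 := by
  intro hc
  apply h
  have : (a:ℂ) = (b:ℂ) := by
    unfold theta at hc
    linear_combination -hc/2
  exact_mod_cast this

lemma qpoly_eval (i l : ℕ) (hl : l ≤ D) :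
    (qpoly D i).eval (theta D l) = if l = i then 1 else 0 := by
  rw [qpoly, Polynomial.eval_prod]
  by_cases h : l = i
  · subst h
    rw [if_pos rfl]
    refine Finset.prod_eq_one fun j hj => ?_
    rw [Finset.mem_erase] at hj
    rw [Polynomial.eval_mul, Polynomial.eval_C, Polynomial.eval_sub,
      Polynomial.eval_X, Polynomial.eval_C]
    exact inv_mul_cancel₀ (theta_sub_ne (Ne.symm hj.1))
  · rw [if_neg h]
    refine Finset.prod_eq_zero
      (Finset.mem_erase.mpr ⟨h, Finset.mem_range.mpr (by omega)⟩) ?_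
    rw [Polynomial.eval_mul, Polynomial.eval_sub, Polynomial.eval_X, Polynomial.eval_C]
    simp

lemma aeval_diagonal (d : Vtx D → ℂ) (p : Polynomial ℂ) :
    Polynomial.aeval (Matrix.diagonal d) p = Matrix.diagonal fun y => p.eval (d y) := by
  induction p using Polynomial.induction_on with
  | C a =>
      ext y z
      rw [Polynomial.aeval_C]
      simp [Matrix.algebraMap_matrix_apply, Matrix.diagonal_apply]
  | add p q hp hq =>
      rw [_root_.map_add, hp, hq, Matrix.diagonal_add]
      refine congrArg Matrix.diagonal (funext fun y => ?_)
      simp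
  | monomial n a hp =>
      rw [pow_succ, ← mul_assoc, _root_.map_mul, Polynomial.aeval_X, hp,
        Matrix.diagonal_mul_diagonal]
      refine congrArg Matrix.diagonal (funext fun y => ?_)
      simp [pow_succ, mul_assoc]

lemma Estar_eq_aeval {i : ℕ} (hi : i ≤ D) :
    EstarMat D i = Polynomial.aeval (dualAdjMat D) (qpoly D i) := by
  rw [dualAdjMat, aeval_diagonal, EstarMat]
  refine congrArg Matrix.diagonal (funext fun y => ?_)
  rw [show ((D:ℂ) - 2 * (wt y : ℂ)) = theta D (wt y) from rfl,
    qpoly_eval i (wt y) (wt_le y)]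

lemma aeval_semiconj {A B P : Matrix (Vtx D) (Vtx D) ℂ} (h : B * P = P * A)
    (p : Polynomial ℂ) :
    Polynomial.aeval B p * P = P * Polynomial.aeval A p := by
  induction p using Polynomial.induction_on with
  | C a =>
      rw [Polynomial.aeval_C, Polynomial.aeval_C, Algebra.algebraMap_eq_smul_one,
        Matrix.smul_mul, Matrix.mul_smul, Matrix.one_mul, Matrix.mul_one]
  | add p q hp hq =>
      rw [_root_.map_add, _root_.map_add, Matrix.add_mul, Matrix.mul_add, hp, hq]
  | monomial n a hp =>
      have e1 : Polynomial.aeval B (Polynomial.C a * Polynomial.X ^ (n+1))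
          = Polynomial.aeval B (Polynomial.C a * Polynomial.X ^ n) * B := by
        rw [pow_succ, ← mul_assoc, _root_.map_mul, Polynomial.aeval_X]
      have e2 : Polynomial.aeval A (Polynomial.C a * Polynomial.X ^ (n+1))
          = Polynomial.aeval A (Polynomial.C a * Polynomial.X ^ n) * A := by
        rw [pow_succ, ← mul_assoc, _root_.map_mul, Polynomial.aeval_X]
      rw [e1, e2, Matrix.mul_assoc, h, ← Matrix.mul_assoc, hp, Matrix.mul_assoc]

lemma P1m_cube : (Matrix.of P1 * Matrix.of P1 * Matrix.of P1 : Matrix Bool Bool ℂ)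
    = ((2:ℂ) - 2*Complex.I) • 1 := by
  ext a b
  simp only [Matrix.mul_apply, Fintype.sum_bool, Matrix.smul_apply, Matrix.one_apply,
    Matrix.of_apply]
  cases a <;> cases b <;>
    · norm_num [P1]
      first
      | ring1
      | linear_combination Complex.I_sq
      | linear_combination -Complex.I_sq
      | linear_combination 2*Complex.I_sq
      | linear_combination -2*Complex.I_sq
      | linear_combination Complex.I*Complex.I_sq
      | linear_combination -Complex.I*Complex.I_sq
      | linear_combination (1+Complex.I)*Complex.I_sq
      | linear_combination (Complex.I-1)*Complex.I_sq
      | linear_combination (-1-Complex.I)*Complex.I_sq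

lemma kron_smul_one (c : ℂ) : kron D (c • 1) = c ^ D • (1 : Matrix (Vtx D) (Vtx D) ℂ) := by
  ext y z
  show (∏ k, (c • (1 : Matrix Bool Bool ℂ)) (y k) (z k)) = (c ^ D • (1 : Matrix (Vtx D) (Vtx D) ℂ)) y z
  by_cases h : y = z
  · subst h
    rw [Finset.prod_congr rfl (fun k _ => by
        rw [Matrix.smul_apply, Matrix.one_apply_eq, smul_eq_mul, mul_one]),
      Finset.prod_const, Finset.card_univ, Fintype.card_fin,
      Matrix.smul_apply, Matrix.one_apply_eq, smul_eq_mul, mul_one]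
  · have hk : ∃ k, y k ≠ z k := by
      by_contra hc; push_neg at hc; exact h (funext hc)
    obtain ⟨k, hk⟩ := hk
    rw [Matrix.smul_apply, Matrix.one_apply_ne h, smul_zero]
    exact Finset.prod_eq_zero (Finset.mem_univ k) (by
      rw [Matrix.smul_apply, Matrix.one_apply_ne hk, smul_zero])

lemma Pmat_cube : Pmat D ^ 3 = (((2:ℂ) - 2*Complex.I) ^ D) • 1 := by
  have h3 : Pmat D ^ 3 = Pmat D * Pmat D * Pmat D := by
    rw [pow_succ, pow_succ, pow_one]
  rw [h3, Pmat_eq_kron, kron_mul, kron_mul, P1m_cube, kron_smul_one]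

lemma two_sub_ne : ((2:ℂ) - 2*Complex.I) ≠ 0 := by
  intro h
  have := congrArg Complex.re h
  simp at this

lemma P_right_inv : Pmat D * ((((2:ℂ) - 2*Complex.I) ^ D)⁻¹ • Pmat D ^ 2) = 1 := by
  rw [Matrix.mul_smul, (pow_succ' (Pmat D) 2).symm, Pmat_cube,
    smul_smul, inv_mul_cancel₀ (pow_ne_zero _ two_sub_ne), one_smul]

lemma P_inv_eq : (Pmat D)⁻¹ = (((2:ℂ) - 2*Complex.I) ^ D)⁻¹ • Pmat D ^ 2 :=
  Matrix.inv_eq_right_inv P_right_inv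

lemma P_mul_inv : Pmat D * (Pmat D)⁻¹ = 1 := by rw [P_inv_eq]; exact P_right_inv

lemma P_inv_mul : (Pmat D)⁻¹ * Pmat D = 1 := by
  rw [P_inv_eq, Matrix.smul_mul, (pow_succ (Pmat D) 2).symm,
    Pmat_cube, smul_smul, inv_mul_cancel₀ (pow_ne_zero _ two_sub_ne), one_smul]

lemma P_sq : Pmat D * Pmat D = (((2:ℂ) - 2*Complex.I) ^ D) • (Pmat D)⁻¹ := by
  rw [P_inv_eq, smul_smul, mul_inv_cancel₀ (pow_ne_zero _ two_sub_ne), one_smul, sq]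

lemma map_mulVecLin_mul (M N : Matrix (Vtx D) (Vtx D) ℂ) (V : Submodule ℂ (Vtx D → ℂ)) :
    Submodule.map (M * N).mulVecLin V
      = Submodule.map M.mulVecLin (Submodule.map N.mulVecLin V) := by
  rw [Matrix.mulVecLin_mul, Submodule.map_comp]

lemma map_mulVecLin_smul {c : ℂ} (hc : c ≠ 0) (M : Matrix (Vtx D) (Vtx D) ℂ)
    (V : Submodule ℂ (Vtx D → ℂ)) :
    Submodule.map (c • M).mulVecLin V = Submodule.map M.mulVecLin V := by
  ext x
  simp only [Submodule.mem_map, Matrix.mulVecLin_apply]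
  constructor
  · rintro ⟨v, hv, rfl⟩
    exact ⟨c • v, V.smul_mem c hv, by
      rw [Matrix.mulVec_smul, ← Matrix.smul_mulVec]⟩
  · rintro ⟨v, hv, rfl⟩
    exact ⟨c⁻¹ • v, V.smul_mem _ hv, by
      rw [Matrix.smul_mulVec, Matrix.mulVec_smul, smul_smul,
        mul_inv_cancel₀ hc, one_smul]⟩

lemma PW_le {W : Submodule ℂ (Vtx D → ℂ)} (hT : IsTMod D W) :
    Submodule.map (Pmat D).mulVecLin W ≤ W := by
  rintro x ⟨w, hw, rfl⟩
  rw [Matrix.mulVecLin_apply, P_factor, ← Matrix.mulVec_mulVec]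
  have hD1 : (D1mat D).mulVec w ∈ W := by
    rw [D1mat, sum_mulVec']
    refine Submodule.sum_mem W fun j hj => ?_
    rw [Matrix.smul_mulVec]
    refine W.smul_mem _ ?_
    rw [Estar_eq_aeval (Nat.lt_succ_iff.mp (Finset.mem_range.mp hj))]
    exact aeval_mulVec_mem _ hT.2 _ w hw
  rw [Kmat, sum_mulVec']
  refine Submodule.sum_mem W fun m hm => ?_
  rw [Matrix.smul_mulVec]
  exact W.smul_mem _ (Am_mulVec_mem hT.1 m _ hD1)

lemma PW_eq {W : Submodule ℂ (Vtx D → ℂ)} (hT : IsTMod D W) :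
    Submodule.map (Pmat D).mulVecLin W = W := by
  have hle := PW_le hT
  refine le_antisymm hle ?_
  have h3 : Submodule.map ((Pmat D ^ 3)).mulVecLin W = W := by
    rw [Pmat_cube, map_mulVecLin_smul (pow_ne_zero _ two_sub_ne), Matrix.mulVecLin_one,
      Submodule.map_id]
  conv_lhs => rw [← h3]
  rw [show Pmat D ^ 3 = Pmat D * (Pmat D * Pmat D) by
      rw [pow_succ, pow_succ, pow_one, mul_assoc],
    map_mulVecLin_mul, map_mulVecLin_mul]
  exact Submodule.map_mono (le_trans (Submodule.map_mono hle) hle)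

lemma PinvW_eq {W : Submodule ℂ (Vtx D → ℂ)} (hT : IsTMod D W) :
    Submodule.map (Pmat D)⁻¹.mulVecLin W = W := by
  conv_lhs => rw [← PW_eq hT]
  rw [← map_mulVecLin_mul, P_inv_mul, Matrix.mulVecLin_one, Submodule.map_id]

end HCProof

/-- For an irreducible `T`-module `W` and `0 ≤ i ≤ D`:
`P(E_i W) = E*_i W`, `P(E*_i W) = Eᵉ_i W`, `P(Eᵉ_i W) = E_i W`. -/
theorem P_cyclic_on_idempotent_images (D : ℕ) (hD : 0 < D)
    (W : Submodule ℂ (Vtx D → ℂ)) (hW : IsIrredTMod D W) (i : ℕ) (hi : i ≤ D) :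
    Submodule.map (Pmat D).mulVecLin (Submodule.map (Emat D i).mulVecLin W)
      = Submodule.map (EstarMat D i).mulVecLin W ∧
    Submodule.map (Pmat D).mulVecLin (Submodule.map (EstarMat D i).mulVecLin W)
      = Submodule.map (EepsMat D i).mulVecLin W ∧
    Submodule.map (Pmat D).mulVecLin (Submodule.map (EepsMat D i).mulVecLin W)
      = Submodule.map (Emat D i).mulVecLin W := by
  obtain ⟨hT, -, -⟩ := hW
  have hPW := PW_eq (D := D) hT
  have hPinvW := PinvW_eq (D := D) hT
  have hsemi : EstarMat D i * Pmat D = Pmat D * Emat D i := by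
    rw [Estar_eq_aeval hi, Emat_eq]
    exact aeval_semiconj dual_mul_P _
  have hc : (((2:ℂ) - 2*Complex.I) ^ D) ≠ 0 := pow_ne_zero D two_sub_ne
  refine ⟨?_, ?_, ?_⟩
  · rw [← map_mulVecLin_mul, ← hsemi, map_mulVecLin_mul, hPW]
  · have hE' : EstarMat D i = Pmat D * Emat D i * (Pmat D)⁻¹ := by
      rw [← hsemi, Matrix.mul_assoc, P_mul_inv, Matrix.mul_one]
    calc Submodule.map (Pmat D).mulVecLin (Submodule.map (EstarMat D i).mulVecLin W)
        = Submodule.map (Pmat D)⁻¹.mulVecLin (Submodule.map (Emat D i).mulVecLin W) := by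
          rw [hE', map_mulVecLin_mul, map_mulVecLin_mul, hPinvW, ← map_mulVecLin_mul,
            P_sq, map_mulVecLin_smul hc]
      _ = Submodule.map (EepsMat D i).mulVecLin W := by
          rw [EepsMat, map_mulVecLin_mul, map_mulVecLin_mul, hPW]
  · have h3 : Pmat D * EepsMat D i = Emat D i * Pmat D := by
      rw [EepsMat, ← Matrix.mul_assoc, ← Matrix.mul_assoc, P_mul_inv, Matrix.one_mul]
    rw [← map_mulVecLin_mul, h3, map_mulVecLin_mul, hPW]
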